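/- Let m ≥ 2 and k ≥ 1, and consider a deck of m^k cards. The in m-shuffle I_m (the in m-shuffle for m stacks of n = m^{k−1} cards) acts on base-m indices by a cyclic shift that flips the digit moved to the end: it sends the card with base-m index (x_1, x_2, …, x_k) to the position with base-m index (x_2, x_3, …, x_k, x̄_1), where x̄_1 = (m−1) − x_1. -/

import Mathlib

/-- Digit sums are bounded by `m ^ n`. -/
lemma digit_sum_lt (m : ℕ) (hm : 1 ≤ m) :
    ∀ (n : ℕ) (f : ℕ → ℕ), (∀ t, f t < m) →
      (∑ t ∈ Finset.range n, f t * m ^ (n - 1 - t)) < m ^ n := by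
  intro n
  induction n with
  | zero => intro f _; simp
  | succ n ih =>
    intro f hf
    rw [Finset.sum_range_succ']
    have h1 : (∑ t ∈ Finset.range n, f (t + 1) * m ^ (n + 1 - 1 - (t + 1)))
        = ∑ t ∈ Finset.range n, f (t + 1) * m ^ (n - 1 - t) := by
      apply Finset.sum_congr rfl
      intro t ht
      congr 2
      omega
    rw [h1]
    simp only [Nat.sub_zero, Nat.add_sub_cancel]
    have h2 : (∑ t ∈ Finset.range n, f (t + 1) * m ^ (n - 1 - t)) < m ^ n :=
      ih _ (fun t => hf (t + 1))
    have h3 : f 0 * m ^ n ≤ (m - 1) * m ^ n :=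
      Nat.mul_le_mul_right _ (by have := hf 0; omega)
    have h4 : (m - 1) * m ^ n + m ^ n = m ^ (n + 1) := by
      have h5 : (m - 1) * m ^ n + m ^ n = m * m ^ n := by
        rw [Nat.sub_one_mul]
        have : m ^ n ≤ m * m ^ n := Nat.le_mul_of_pos_left _ (by omega)
        omega
      rw [h5, pow_succ, mul_comm]
    omega

set_option maxHeartbeats 1000000 in
/-- For `m ≥ 2`, `k ≥ 1`, the in `m`-shuffle on a deck of `m^k` cards
(`m` stacks of `n = m^(k−1)` cards) acts on base-`m` digit `k`-tuples by
`(x_1, …, x_k) ↦ (x_2, …, x_k, x̄_1)` where `x̄_1 = (m−1) − x_1`.  Digits are indexed by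
`Fin k`, `x t` being the digit of weight `m^(k−1−t)`. -/
theorem in_shuffle_digit_action (m k : ℕ) (hm : 2 ≤ m) (hk : 1 ≤ k)
    (I : Equiv.Perm (Fin (m ^ k)))
    (hI : ∀ i : Fin (m ^ k),
      (I i : ℕ) = m * ((i : ℕ) % m ^ (k - 1)) + (m - 1 - (i : ℕ) / m ^ (k - 1))) :
    ∀ x : Fin k → ℕ, (∀ t, x t < m) →
      ∀ i : Fin (m ^ k), (i : ℕ) = ∑ t : Fin k, x t * m ^ (k - 1 - (t : ℕ)) →
        (I i : ℕ) = ∑ t : Fin k,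
          (if h : (t : ℕ) + 1 < k then x ⟨(t : ℕ) + 1, h⟩
           else m - 1 - x ⟨0, by omega⟩) * m ^ (k - 1 - (t : ℕ)) := by
  intro x hx i hi
  obtain ⟨k', rfl⟩ : ∃ k', k = k' + 1 := ⟨k - 1, by omega⟩
  -- extend x to ℕ
  set x' : ℕ → ℕ := fun t => if h : t < k' + 1 then x ⟨t, h⟩ else 0 with hx'
  have hx'lt : ∀ t, x' t < m := by
    intro t
    simp only [hx']
    split
    · exact hx _
    · omega
  -- rewrite i as a range sum
  have hi' : (i : ℕ) = ∑ t ∈ Finset.range (k' + 1), x' t * m ^ (k' + 1 - 1 - t) := by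
    rw [hi, ← Fin.sum_univ_eq_sum_range (fun t => x' t * m ^ (k' + 1 - 1 - t))]
    apply Finset.sum_congr rfl
    intro t _
    simp only [hx', t.isLt, dif_pos, Fin.eta]
  set r : ℕ := ∑ t ∈ Finset.range k', x' (t + 1) * m ^ (k' - 1 - t) with hr
  have hisplit : (i : ℕ) = r + x' 0 * m ^ k' := by
    rw [hi', Finset.sum_range_succ']
    congr 1
    apply Finset.sum_congr rfl
    intro t ht
    congr 2
    omega
  have hrlt : r < m ^ k' :=
    digit_sum_lt m (by omega) k' (fun t => x' (t + 1)) (fun t => hx'lt (t + 1))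
  have hmod : (i : ℕ) % m ^ (k' + 1 - 1) = r := by
    simp only [Nat.add_sub_cancel]
    rw [hisplit, Nat.add_mul_mod_self_right, Nat.mod_eq_of_lt hrlt]
  have hdiv : (i : ℕ) / m ^ (k' + 1 - 1) = x' 0 := by
    simp only [Nat.add_sub_cancel]
    rw [hisplit, Nat.add_mul_div_right _ _ (Nat.pow_pos (a := m) (n := k') (by omega)),
      Nat.div_eq_of_lt hrlt, Nat.zero_add]
  rw [hI i, hmod, hdiv]
  have hx0 : x ⟨0, by omega⟩ = x' 0 := by simp [hx']
  -- convert the RHS Fin sum to a range sum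
  have hsum : (∑ t : Fin (k' + 1),
      (if h : (t : ℕ) + 1 < k' + 1 then x ⟨(t : ℕ) + 1, h⟩
       else m - 1 - x ⟨0, by omega⟩) * m ^ (k' + 1 - 1 - (t : ℕ)))
      = ∑ t ∈ Finset.range (k' + 1),
      (if h : t + 1 < k' + 1 then x ⟨t + 1, h⟩
       else m - 1 - x ⟨0, Nat.succ_pos k'⟩) * m ^ (k' + 1 - 1 - t) :=
    Fin.sum_univ_eq_sum_range
      (fun t => (if h : t + 1 < k' + 1 then x ⟨t + 1, h⟩
         else m - 1 - x ⟨0, Nat.succ_pos k'⟩) * m ^ (k' + 1 - 1 - t)) (k' + 1)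
  rw [hsum, Finset.sum_range_succ]
  have hlast : (if h : k' + 1 < k' + 1 then x ⟨k' + 1, h⟩
      else m - 1 - x ⟨0, Nat.succ_pos k'⟩) * m ^ (k' + 1 - 1 - k') = m - 1 - x' 0 := by
    rw [dif_neg (by omega), Nat.add_sub_cancel, Nat.sub_self, pow_zero, mul_one]
    exact congrArg (fun v => m - 1 - v) hx0
  rw [hlast]
  have hbody : (∑ t ∈ Finset.range k',
      (if h : t + 1 < k' + 1 then x ⟨t + 1, h⟩
       else m - 1 - x ⟨0, Nat.succ_pos k'⟩) * m ^ (k' + 1 - 1 - t)) = m * r := by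
    rw [hr, Finset.mul_sum]
    apply Finset.sum_congr rfl
    intro t ht
    simp only [Finset.mem_range] at ht
    have h' : t + 1 < k' + 1 := by omega
    rw [dif_pos h']
    have h1 : x' (t + 1) = x ⟨t + 1, h'⟩ := dif_pos h'
    have h2 : m * (x' (t + 1) * m ^ (k' - 1 - t)) = x' (t + 1) * (m * m ^ (k' - 1 - t)) := by
      ring
    rw [h2, ← pow_succ']
    have h3 : k' - 1 - t + 1 = k' + 1 - 1 - t := by omega
    rw [h3, h1]
  rw [hbody]
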